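/- Let p be an odd prime, k ≥ 2 an integer, and s a finite multiset of complex p^k-th roots of unity. Then the conductor of |s| equals p^k if and only if |s^{(p^k)}| ≠ 0. Equivalently, |s| does not lie in the cyclotomic field Q(ζ_{p^{k−1}}) if and only if the sum of the entries of s of multiplicative order exactly p^k is nonzero. -/

import Mathlib

open CategoryTheory

/-- `Qcyc N` is the `N`-th cyclotomic field `ℚ(ζ_N)`, realised as the subfield of `ℂ`
generated by all `N`-th roots of unity. -/
noncomputable def Qcyc (N : ℕ) : IntermediateField ℚ ℂ :=
  IntermediateField.adjoin ℚ {z : ℂ | z ^ N = 1}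

/-- `Qadj c` is the subfield `ℚ(c)` of `ℂ` generated by a complex number `c`. -/
noncomputable def Qadj (c : ℂ) : IntermediateField ℚ ℂ :=
  IntermediateField.adjoin ℚ {c}

/-- `f` is the conductor of the complex number `c`: the least positive integer `N`
with `c ∈ ℚ(ζ_N)`. -/
def IsConductorOf (c : ℂ) (f : ℕ) : Prop :=
  IsLeast {N : ℕ | 0 < N ∧ c ∈ Qcyc N} f

/-- `f` is the conductor of the character `χ`: the least positive integer `N` such that all
values of `χ` lie in `ℚ(ζ_N)`. -/
def IsCharConductor {G : Type*} [Monoid G] (χ : G → ℂ) (f : ℕ) : Prop :=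
  IsLeast {N : ℕ | 0 < N ∧ ∀ g, χ g ∈ Qcyc N} f

/-- Property 1.3 of Navarro–Tiep for `(G, χ, p)`: writing the conductor of `χ` as
`f = p ^ a * m` with `p ∤ m` (so that `p ^ a = p ^ (f.factorization p)` is the `p`-part of `f`),
there is a `p`-element `g ∈ G` such that `p ∤ [ℚ(ζ_{p^a}) : ℚ(χ(g))]`. -/
def Property13 {G : Type*} [Group G] (χ : G → ℂ) (p : ℕ) : Prop :=
  ∀ f : ℕ, IsCharConductor χ f →
    ∃ g : G, (∃ j : ℕ, orderOf g = p ^ j) ∧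
      ¬ p ∣ (Qadj (χ g)).relfinrank (Qcyc (p ^ f.factorization p))


section Stmt4Aux


open IntermediateField Polynomial

lemma root_mem_Qcyc {z : ℂ} {N : ℕ} (hz : z ^ N = 1) : z ∈ Qcyc N :=
  IntermediateField.subset_adjoin ℚ _ hz

lemma isIntegral_of_root {z : ℂ} {N : ℕ} (hN : N ≠ 0) (hz : z ^ N = 1) : IsIntegral ℚ z := by
  refine ⟨X ^ N - C 1, monic_X_pow_sub_C 1 hN, ?_⟩
  simp [hz]

lemma Qcyc_toSubalgebra {N : ℕ} (hN : N ≠ 0) :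
    (Qcyc N).toSubalgebra = Algebra.adjoin ℚ {z : ℂ | z ^ N = 1} := by
  apply IntermediateField.adjoin_toSubalgebra_of_isAlgebraic
  exact fun x hx => (isIntegral_of_root hN hx).isAlgebraic

-- the hom construction
noncomputable def Psi {M : ℕ} (hM : 0 < M) {ζ : ℂ} (hζ : IsPrimitiveRoot ζ M)
    (i : ℕ) (hi : Nat.Coprime i M) : ℚ⟮ζ⟯ →ₐ[ℚ] ℂ := by
  haveI : NeZero ((M : ℕ) : ℂ) := ⟨Nat.cast_ne_zero.mpr hM.ne'⟩
  refine (IntermediateField.algHomAdjoinIntegralEquiv ℚ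
    (isIntegral_of_root hM.ne' hζ.pow_eq_one)).symm ⟨ζ ^ i, ?_⟩
  rw [← Polynomial.cyclotomic_eq_minpoly_rat hζ hM, Polynomial.mem_aroots]
  refine ⟨Polynomial.cyclotomic_ne_zero M ℚ, ?_⟩
  have := (Polynomial.isRoot_cyclotomic_iff (R := ℂ)).mpr (hζ.pow_of_coprime i hi)
  rw [Polynomial.IsRoot.def, ← Polynomial.map_cyclotomic M (algebraMap ℚ ℂ),
    Polynomial.eval_map] at this
  rw [Polynomial.aeval_def]
  exact this

lemma Psi_gen {M : ℕ} (hM : 0 < M) {ζ : ℂ} (hζ : IsPrimitiveRoot ζ M)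
    (i : ℕ) (hi : Nat.Coprime i M) :
    Psi hM hζ i hi (IntermediateField.AdjoinSimple.gen ℚ ζ) = ζ ^ i := by
  haveI : NeZero ((M : ℕ) : ℂ) := ⟨Nat.cast_ne_zero.mpr hM.ne'⟩
  exact IntermediateField.algHomAdjoinIntegralEquiv_symm_apply_gen (K := ℂ) ℚ
    (isIntegral_of_root hM.ne' hζ.pow_eq_one) _

lemma Psi_apply {M : ℕ} (hM : 0 < M) {ζ : ℂ} (hζ : IsPrimitiveRoot ζ M)
    (i : ℕ) (hi : Nat.Coprime i M) {z : ℂ} (hz : z ^ M = 1) (hzK : z ∈ ℚ⟮ζ⟯) :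
    Psi hM hζ i hi ⟨z, hzK⟩ = z ^ i := by
  haveI : NeZero M := ⟨hM.ne'⟩
  obtain ⟨j, -, hj⟩ := hζ.eq_pow_of_pow_eq_one hz
  have hgen : (⟨z, hzK⟩ : ℚ⟮ζ⟯) = (IntermediateField.AdjoinSimple.gen ℚ ζ) ^ j := by
    ext; simp [hj]
  rw [hgen, map_pow, Psi_gen hM hζ i hi, ← pow_mul, mul_comm, pow_mul, hj]

lemma mem_adjoin_of_root {M : ℕ} [NeZero M] {ζ : ℂ} (hζ : IsPrimitiveRoot ζ M)
    {z : ℂ} (hz : z ^ M = 1) : z ∈ ℚ⟮ζ⟯ := by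
  obtain ⟨j, -, hj⟩ := hζ.eq_pow_of_pow_eq_one hz
  rw [← hj]
  exact pow_mem (IntermediateField.mem_adjoin_simple_self ℚ ζ) j

open Finset

-- u = 1 + m * p^(k-1), exponent expansion
lemma upow_expand (p j m : ℕ) (t : ℕ) :
    ∃ d : ℕ, (1 + m * p ^ (j + 1)) ^ t = 1 + t * m * p ^ (j + 1) + d * p ^ (j + 2) := by
  induction t with
  | zero => exact ⟨0, by simp⟩
  | succ t ih =>
    obtain ⟨d, hd⟩ := ih
    refine ⟨t * m ^ 2 * p ^ j + d * (1 + m * p ^ (j + 1)), ?_⟩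
    rw [pow_succ, hd]
    ring

-- root computation: z^(u^t) = z * (z^(p^(j+1)))^(t*m)
lemma root_pow_ut {z : ℂ} {p j m : ℕ} (hz : z ^ p ^ (j + 2) = 1) (t : ℕ) :
    z ^ ((1 + m * p ^ (j + 1)) ^ t) = z * (z ^ p ^ (j + 1)) ^ (t * m) := by
  obtain ⟨d, hd⟩ := upow_expand p j m t
  have e1 : 1 + t * m * p ^ (j + 1) + d * p ^ (j + 2)
      = 1 + p ^ (j + 1) * (t * m) + p ^ (j + 2) * d := by ring
  rw [hd, e1, pow_add, pow_add, pow_one, pow_mul z (p ^ (j + 1)), pow_mul z (p ^ (j + 2)), hz, one_pow, mul_one]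

-- geometric sum of p-th root of unity
lemma geom_zero {x : ℂ} (hx1 : x ≠ 1) {p : ℕ} (hxp : x ^ p = 1) :
    ∑ t ∈ range p, x ^ t = 0 := by
  rw [geom_sum_eq hx1, hxp, sub_self, zero_div]

-- per-element inner sum
lemma rootInnerSum {p k : ℕ} (hp : p.Prime) (hk : 2 ≤ k) {m : ℕ} (hm : ¬ p ∣ m)
    {z : ℂ} (hz : z ^ p ^ k = 1) :
    ∑ t ∈ range p, z ^ ((1 + m * p ^ (k - 1)) ^ t) =
      if orderOf z = p ^ k then 0 else (p : ℂ) * z := by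
  obtain ⟨j, rfl⟩ : ∃ j, k = j + 2 := ⟨k - 2, by omega⟩
  have hj1 : j + 2 - 1 = j + 1 := by omega
  rw [hj1]
  have hrw : ∀ t ∈ range p, z ^ ((1 + m * p ^ (j + 1)) ^ t)
      = z * (z ^ p ^ (j + 1)) ^ (t * m) := fun t _ => root_pow_ut hz t
  rw [Finset.sum_congr rfl hrw]
  by_cases hord : orderOf z = p ^ (j + 2)
  · rw [if_pos hord]
    set w := z ^ p ^ (j + 1) with hw
    have hwp : w ^ p = 1 := by rw [hw, ← pow_mul, ← pow_succ, hz]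
    have hwne : w ≠ 1 := by
      intro h
      have : orderOf z ∣ p ^ (j + 1) := orderOf_dvd_of_pow_eq_one h
      rw [hord] at this
      have h1 := Nat.le_of_dvd (pow_pos hp.pos _) this
      have h2 : p ^ (j+1) < p ^ (j+2) := Nat.pow_lt_pow_right hp.one_lt (by omega)
      omega
    have hwm : w ^ m ≠ 1 := by
      intro h
      have h1 : orderOf w ∣ m := orderOf_dvd_of_pow_eq_one h
      have h2 : orderOf w ∣ p := orderOf_dvd_of_pow_eq_one hwp
      rcases (Nat.Prime.eq_one_or_self_of_dvd hp _ h2) with h3 | h3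
      · exact hwne (orderOf_eq_one_iff.mp h3)
      · rw [h3] at h1; exact hm h1
    have : ∀ t ∈ range p, z * w ^ (t * m) = z * (w ^ m) ^ t := by
      intro t _
      conv_rhs => rw [← pow_mul w m t]
      rw [mul_comm m t]
    rw [Finset.sum_congr rfl this, ← Finset.mul_sum,
      geom_zero hwm (by rw [← pow_mul, mul_comm m p, pow_mul, hwp, one_pow]), mul_zero]
  · rw [if_neg hord]
    have hdvd : orderOf z ∣ p ^ (j + 2) := orderOf_dvd_of_pow_eq_one hz
    obtain ⟨i, hik, hoi⟩ := (Nat.dvd_prime_pow hp).mp hdvd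
    have hij : i ≠ j + 2 := fun h => hord (by rw [hoi, h])
    have hzp : z ^ p ^ (j + 1) = 1 := by
      apply orderOf_dvd_iff_pow_eq_one.mp
      rw [hoi]
      exact pow_dvd_pow p (by omega : i ≤ j + 1)
    simp [hzp, Finset.sum_const, Finset.card_range]


open IntermediateField in
lemma sum_swap_aux (s : Multiset ℂ) (p : ℕ) (f : ℂ → ℕ → ℂ) :
    ∑ t ∈ Finset.range p, (s.map fun z => f z t).sum
      = (s.map fun z => ∑ t ∈ Finset.range p, f z t).sum := by
  induction s using Multiset.induction with
  | empty => simp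
  | cons a s ih => simp [Finset.sum_add_distrib, ih]

open IntermediateField in
lemma key_lemma (p k : ℕ) (hp : p.Prime) (hk : 2 ≤ k)
    (s : Multiset ℂ) (hs : ∀ z ∈ s, z ^ p ^ k = 1) (N : ℕ) (hN : 0 < N)
    (hndvd : ¬ p ^ k ∣ N) (hmem : s.sum ∈ Qcyc N) :
    (s.filter (fun z => orderOf z = p ^ k)).sum = 0 := by
  have hN0 : N ≠ 0 := hN.ne'
  set v := N.factorization p with hv
  have hvk : v < k := by
    by_contra h
    exact hndvd ((Nat.Prime.pow_dvd_iff_le_factorization hp hN0).mpr (by omega))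
  set m := N / p ^ v with hmdef
  have hm : ¬ p ∣ m := Nat.not_dvd_ordCompl hp hN0
  have hpm : p ^ v * m = N := Nat.ordProj_mul_ordCompl_eq_self N p
  have hm0 : m ≠ 0 := by
    intro h; rw [h, mul_zero] at hpm; exact hN0 hpm.symm
  have hNd : N ∣ m * p ^ (k - 1) := by
    refine ⟨p ^ (k - 1 - v), ?_⟩
    rw [← hpm, mul_comm (p ^ v) m, mul_assoc, ← pow_add]
    congr 2
    omega
  set u := 1 + m * p ^ (k - 1) with hu
  have hu1 : 1 ≤ u := by omega
  set M := N * p ^ k with hM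
  have hMpos : 0 < M := Nat.mul_pos hN (pow_pos hp.pos k)
  haveI : NeZero M := ⟨hMpos.ne'⟩
  have hcop : Nat.Coprime u M := by
    apply Nat.Coprime.mul_right
    · obtain ⟨c, hc⟩ := hNd
      have : u = 1 + N * c := by rw [hu, hc]
      rw [this]
      exact ((Nat.coprime_add_mul_left_right N 1 c).mpr (Nat.coprime_one_right N)).symm
    · refine (Nat.Coprime.pow_right k ?_)
      have hpu : ¬ p ∣ u := by
        intro hdvd
        have h1 : p ∣ m * p ^ (k - 1) := by
          refine Dvd.dvd.mul_left ?_ m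
          exact dvd_pow_self p (by omega : k - 1 ≠ 0)
        have : p ∣ 1 := (Nat.dvd_add_right h1).mp (by rwa [hu, add_comm] at hdvd)
        exact hp.one_lt.ne' (Nat.dvd_one.mp this)
      exact ((Nat.Prime.coprime_iff_not_dvd hp).mpr hpu).symm
  set ζ : ℂ := Complex.exp (2 * Real.pi * Complex.I / M) with hζdef
  have hζ : IsPrimitiveRoot ζ M := Complex.isPrimitiveRoot_exp M hMpos.ne'
  -- memberships
  have hsM : ∀ z ∈ s, z ^ M = 1 := by
    intro z hz
    rw [hM, mul_comm, pow_mul, hs z hz, one_pow]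
  have hzK : ∀ z ∈ s, z ∈ ℚ⟮ζ⟯ := fun z hz => mem_adjoin_of_root hζ (hsM z hz)
  have hsummem : s.sum ∈ ℚ⟮ζ⟯ := multiset_sum_mem s hzK
  -- the N-th roots are fixed
  have hNfix : ∀ t : ℕ, ∀ z : ℂ, z ^ N = 1 → z ^ u ^ t = z := by
    intro t z hz
    have h1 : (1 : ℕ) ≡ u [MOD N] := by
      rw [Nat.modEq_iff_dvd' hu1]
      have : u - 1 = m * p ^ (k - 1) := by omega
      rw [this]; exact hNd
    have h2 : (1 : ℕ) ≡ u ^ t [MOD N] := by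
      simpa using (Nat.ModEq.pow t h1)
    have h3 : N ∣ u ^ t - 1 := (Nat.modEq_iff_dvd' (Nat.one_le_pow t u (by omega))).mp h2
    obtain ⟨c, hc⟩ := h3
    have hut : u ^ t = 1 + N * c := by
      have := Nat.one_le_pow t u (by omega : 0 < u)
      omega
    rw [hut, pow_add, pow_one, pow_mul, hz, one_pow, mul_one]
  -- key identity for each t
  have hmain : ∀ t ∈ Finset.range p, (s.map fun z => z ^ u ^ t).sum = s.sum := by
    intro t _
    set ψ := Psi hMpos hζ (u ^ t) (Nat.Coprime.pow_left t hcop) with hψ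
    have claim1 : ψ ⟨s.sum, hsummem⟩ = s.sum := by
      set E := AlgHom.equalizer ψ (ℚ⟮ζ⟯.val) with hE
      set F' := E.map (ℚ⟮ζ⟯.val) with hF'
      have hsub : Algebra.adjoin ℚ {z : ℂ | z ^ N = 1} ≤ F' := by
        apply Algebra.adjoin_le
        intro z hz
        have hzM : z ^ M = 1 := by rw [hM, pow_mul, hz, one_pow]
        have hzmem : z ∈ ℚ⟮ζ⟯ := mem_adjoin_of_root hζ hzM
        refine ⟨⟨z, hzmem⟩, ?_, rfl⟩
        show ψ ⟨z, hzmem⟩ = ℚ⟮ζ⟯.val ⟨z, hzmem⟩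
        rw [hψ, Psi_apply hMpos hζ _ _ hzM hzmem]
        exact (hNfix t z hz)
      have hsum' : s.sum ∈ Algebra.adjoin ℚ {z : ℂ | z ^ N = 1} := by
        rw [← Qcyc_toSubalgebra hN0]
        exact hmem
      obtain ⟨y, hyE, hyval⟩ := hsub hsum'
      have hyeq : y = ⟨s.sum, hsummem⟩ := Subtype.ext hyval
      have hyE' : ψ y = ℚ⟮ζ⟯.val y := hyE
      rw [← hyeq]
      exact hyE'.trans hyval
    have claim2 : ψ ⟨s.sum, hsummem⟩ = (s.map fun z => z ^ u ^ t).sum := by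
      have hrep : (⟨s.sum, hsummem⟩ : ℚ⟮ζ⟯)
          = (s.attach.map (fun z => (⟨z.1, hzK z.1 z.2⟩ : ℚ⟮ζ⟯))).sum := by
        apply Subtype.ext
        push_cast [← map_multiset_sum (ℚ⟮ζ⟯.val)]
        rw [Multiset.map_map]
        simp only [Function.comp]
        exact (congrArg Multiset.sum (Multiset.attach_map_val s)).symm
      rw [hrep, map_multiset_sum, Multiset.map_map]
      have : ∀ z ∈ s.attach, (ψ ∘ fun z : {x // x ∈ s} => (⟨z.1, hzK z.1 z.2⟩ : ℚ⟮ζ⟯)) z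
          = z.1 ^ u ^ t := by
        intro z _
        exact Psi_apply hMpos hζ _ _ (hsM z.1 z.2) (hzK z.1 z.2)
      rw [Multiset.map_congr rfl this]
      exact congrArg Multiset.sum (Multiset.attach_map_val' s (fun z => z ^ u ^ t))
    rw [← claim2, claim1]
  -- sum over t
  have htot : (p : ℂ) * s.sum = (s.map fun z => ∑ t ∈ Finset.range p, z ^ u ^ t).sum := by
    rw [← sum_swap_aux, Finset.sum_congr rfl hmain, Finset.sum_const, Finset.card_range,
      nsmul_eq_mul]
  have hinner : ∀ z ∈ s, ∑ t ∈ Finset.range p, z ^ u ^ t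
      = if orderOf z = p ^ k then 0 else (p : ℂ) * z := by
    intro z hz
    exact rootInnerSum hp hk hm (hs z hz)
  rw [Multiset.map_congr rfl hinner] at htot
  -- split the filter
  classical
  have hsplit := Multiset.filter_add_not (fun z => orderOf z = p ^ k) s
  set s₁ := s.filter (fun z => orderOf z = p ^ k) with hs₁
  set s₂ := s.filter (fun z => ¬ orderOf z = p ^ k) with hs₂
  have hsum_split : s.sum = s₁.sum + s₂.sum := by
    conv_lhs => rw [← hsplit]
    rw [Multiset.sum_add]
  have hmap : (s.map fun z => if orderOf z = p ^ k then (0:ℂ) else (p : ℂ) * z).sum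
      = (p : ℂ) * s₂.sum := by
    conv_lhs => rw [← hsplit]
    rw [Multiset.map_add, Multiset.sum_add]
    have h1 : (s₁.map fun z => if orderOf z = p ^ k then (0:ℂ) else (p : ℂ) * z).sum = 0 := by
      have e : (s₁.map fun z => if orderOf z = p ^ k then (0:ℂ) else (p : ℂ) * z)
          = s₁.map (fun _ => (0:ℂ)) :=
        Multiset.map_congr rfl (fun z hz => by
          have hz' : orderOf z = p ^ k := by
            rw [hs₁] at hz; exact (Multiset.mem_filter.mp hz).2
          exact if_pos hz')
      rw [e]
      simp
    have h2 : (s₂.map fun z => if orderOf z = p ^ k then (0:ℂ) else (p : ℂ) * z).sum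
        = (p : ℂ) * s₂.sum := by
      have e : (s₂.map fun z => if orderOf z = p ^ k then (0:ℂ) else (p : ℂ) * z)
          = s₂.map (fun z => (p : ℂ) * z) :=
        Multiset.map_congr rfl (fun z hz => by
          have hz' : ¬ orderOf z = p ^ k := by
            rw [hs₂] at hz; exact (Multiset.mem_filter.mp hz).2
          exact if_neg hz')
      rw [e, Multiset.sum_map_mul_left]
      simp [Multiset.map_id']
    rw [h1, h2, zero_add]
  rw [hmap, hsum_split, mul_add] at htot
  have hpne : (p : ℂ) ≠ 0 := Nat.cast_ne_zero.mpr hp.pos.ne'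
  have : (p : ℂ) * s₁.sum = 0 := by linear_combination htot
  exact (mul_eq_zero.mp this).resolve_left hpne


open scoped Classical in
lemma not_order_mem_aux {p k : ℕ} (hp : p.Prime) (hk : 2 ≤ k) {z : ℂ}
    (hz : z ^ p ^ k = 1) (hne : ¬ orderOf z = p ^ k) : z ^ p ^ (k - 1) = 1 := by
  have hdvd : orderOf z ∣ p ^ k := orderOf_dvd_of_pow_eq_one hz
  obtain ⟨i, hik, hoi⟩ := (Nat.dvd_prime_pow hp).mp hdvd
  have hij : i ≠ k := fun h => hne (by rw [hoi, h])
  apply orderOf_dvd_iff_pow_eq_one.mp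
  rw [hoi]
  exact pow_dvd_pow p (by omega : i ≤ k - 1)

end Stmt4Aux

open scoped Classical in
/-- for a multiset `s` of `p^k`-th roots of unity, the conductor of `|s|`
is `p^k` iff the sum of the entries of order exactly `p^k` is nonzero; equivalently,
`|s| ∉ ℚ(ζ_{p^{k-1}})` iff that sum is nonzero. -/
theorem stmt4 (p k : ℕ) (hp : p.Prime) (hodd : Odd p) (hk : 2 ≤ k)
    (s : Multiset ℂ) (hs : ∀ z ∈ s, z ^ p ^ k = 1) :
    (IsConductorOf s.sum (p ^ k) ↔ (s.filter (fun z => orderOf z = p ^ k)).sum ≠ 0) ∧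
    (s.sum ∉ Qcyc (p ^ (k - 1)) ↔ (s.filter (fun z => orderOf z = p ^ k)).sum ≠ 0) := by
  have hlt : p ^ (k - 1) < p ^ k := Nat.pow_lt_pow_right hp.one_lt (by omega)
  have hknd : ¬ p ^ k ∣ p ^ (k - 1) := fun h =>
    absurd (Nat.le_of_dvd (pow_pos hp.pos _) h) (by omega)
  have hBA : (s.filter (fun z => orderOf z = p ^ k)).sum
      + (s.filter (fun z => ¬ orderOf z = p ^ k)).sum = s.sum := by
    rw [← Multiset.sum_add, Multiset.filter_add_not]
  have hAmem : (s.filter (fun z => ¬ orderOf z = p ^ k)).sum ∈ Qcyc (p ^ (k - 1)) := by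
    apply multiset_sum_mem
    intro z hz
    have hzs := (Multiset.mem_filter.mp hz).1
    have hzne := (Multiset.mem_filter.mp hz).2
    exact root_mem_Qcyc (not_order_mem_aux hp hk (hs z hzs) hzne)
  have hmem_if_zero : (s.filter (fun z => orderOf z = p ^ k)).sum = 0 →
      s.sum ∈ Qcyc (p ^ (k - 1)) := by
    intro h0
    rw [← hBA, h0, zero_add]
    exact hAmem
  have key : ∀ N : ℕ, 0 < N → ¬ p ^ k ∣ N → s.sum ∈ Qcyc N →
      (s.filter (fun z => orderOf z = p ^ k)).sum = 0 :=
    fun N hN h1 h2 => key_lemma p k hp hk s hs N hN h1 h2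
  constructor
  · constructor
    · intro hcond
      intro hB0
      have hmem := hmem_if_zero hB0
      have := hcond.2 ⟨pow_pos hp.pos _, hmem⟩
      omega
    · intro hB
      refine ⟨⟨pow_pos hp.pos k, ?_⟩, ?_⟩
      · exact multiset_sum_mem s (fun z hz => root_mem_Qcyc (hs z hz))
      · rintro N ⟨hN, hNmem⟩
        by_cases hdvd : p ^ k ∣ N
        · exact Nat.le_of_dvd hN hdvd
        · exact absurd (key N hN hdvd hNmem) hB
  · constructor
    · intro hnot hB0
      exact hnot (hmem_if_zero hB0)
    · intro hB hmem
      exact hB (key (p ^ (k - 1)) (pow_pos hp.pos _) hknd hmem)
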